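/- Every affine permutation w with 0 < w(1) < w(2) < ... < w(n) and degree r > 0 (where degree is (1/n)·Σ_{i=1}^n (w(i) − i)) can be uniquely written in the form w = (s_{ν_r}···s_2 s_1)π ··· (s_{ν_2}···s_2 s_1)π (s_{ν_1}···s_2 s_1)π, where π is the affine permutation i ↦ i+1, the s_i are simple transpositions, and n > ν_1 ≥ ν_2 ≥ ... ≥ ν_r ≥ 0 (parts equal to zero give empty products of transpositions). -/

import Mathlib

/-! Auxiliary mod arithmetic toolkit -/

lemma modshift (n x c : ℤ) : (x + c) % n = (x % n + c) % n := by
  conv_lhs => rw [Int.add_emod]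
  conv_rhs => rw [Int.add_emod, Int.emod_emod_of_dvd _ dvd_rfl]

lemma modbd (n a : ℤ) (hn : 0 < n) : 0 ≤ a % n ∧ a % n < n :=
  ⟨Int.emod_nonneg a (by omega), Int.emod_lt_of_pos a hn⟩

lemma modcases (n a : ℤ) (hn : 0 < n) (h0 : -n ≤ a) (h1 : a < 2*n) :
    a % n = a + n ∨ a % n = a ∨ a % n = a - n := by
  rcases lt_or_ge a 0 with h | h
  · left
    have h2 : (a + n) % n = a % n := by
      rw [show a + n = a + n * 1 by ring]; exact Int.add_mul_emod_self_left ..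
    rw [← h2, Int.emod_eq_of_lt (by omega) (by omega)]
  · rcases lt_or_ge a n with h2 | h2
    · right; left; exact Int.emod_eq_of_lt h h2
    · right; right
      have h3 : (a - n) % n = a % n := by
        rw [Int.sub_emod, Int.emod_self, sub_zero, Int.emod_emod_of_dvd _ dvd_rfl]
      rw [← h3, Int.emod_eq_of_lt (by omega) (by omega)]

lemma modc (n x c : ℤ) (hn : 0 < n) (h0 : -n ≤ x % n + c) (h1 : x % n + c < 2*n) :
    (x + c) % n = x % n + c + n ∨ (x + c) % n = x % n + c ∨ (x + c) % n = x % n + c - n := by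
  rw [modshift]; exact modcases n _ hn h0 h1

/-! Statement-provided definitions -/

/-- The simple transposition `s_i` as an `n`-periodic permutation of `ℤ`:
it adds 1 to integers congruent to `i` and subtracts 1 from those congruent to
`i+1` mod `n`. -/
def sFun (n i : ℕ) : ℤ → ℤ := fun x =>
  if x % n = (i : ℤ) % n then x + 1
  else if x % n = ((i : ℤ) + 1) % n then x - 1
  else x

/-- `sprod n ν = s_ν ∘ ⋯ ∘ s_2 ∘ s_1` (the empty product for `ν = 0`). -/
def sprod (n : ℕ) : ℕ → (ℤ → ℤ)
  | 0 => id
  | k + 1 => sFun n (k + 1) ∘ sprod n k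

/-- The affine permutation `π : i ↦ i + 1`. -/
def piF : ℤ → ℤ := fun x => x + 1

/-! The closed form of the basic factor and its inverse -/

/-- The basic degree-1 factor `c_ν = s_ν ⋯ s_1 π` in closed form. -/
def cF (n ν : ℕ) : ℤ → ℤ := fun x =>
  if x % n = 0 then x + 1 + ν else if x % n ≤ ν then x else x + 1

/-- Inverse of `cF`. -/
def cInv (n ν : ℕ) : ℤ → ℤ := fun y =>
  if y % n = ((ν : ℤ) + 1) % n then y - 1 - ν
  else if 1 ≤ y % n ∧ y % n ≤ ν then y else y - 1

section C
variable {n : ℕ} (hn : 2 ≤ n)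
include hn

lemma cInv_cF {ν : ℕ} (hν : ν < n) (x : ℤ) : cInv n ν (cF n ν x) = x := by
  have hN : (0:ℤ) < n := by exact_mod_cast (by omega : 0 < n)
  have hνZ : (ν:ℤ) < n := by exact_mod_cast hν
  have hu := modbd n x hN
  have hv := modbd n ((ν:ℤ)+1) hN
  have hvc := modcases n ((ν:ℤ)+1) hN (by omega) (by omega)
  by_cases h1 : x % n = 0
  · have hcF : cF n ν x = x + (1 + (ν:ℤ)) := by simp only [cF, if_pos h1]; ring
    rw [hcF]
    have hb := modbd n (x + (1+(ν:ℤ))) hN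
    have hc := modc n x (1+(ν:ℤ)) hN (by omega) (by omega)
    simp only [cInv]
    split_ifs <;> omega
  · by_cases h2 : x % n ≤ ν
    · have hcF : cF n ν x = x := by simp only [cF, if_neg h1, if_pos h2]
      rw [hcF]
      simp only [cInv]
      split_ifs <;> omega
    · have hcF : cF n ν x = x + 1 := by simp only [cF, if_neg h1, if_neg h2]
      rw [hcF]
      have hb := modbd n (x + 1) hN
      have hc := modc n x 1 hN (by omega) (by omega)
      simp only [cInv]
      split_ifs <;> omega

lemma cF_cInv {ν : ℕ} (hν : ν < n) (y : ℤ) : cF n ν (cInv n ν y) = y := by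
  have hN : (0:ℤ) < n := by exact_mod_cast (by omega : 0 < n)
  have hνZ : (ν:ℤ) < n := by exact_mod_cast hν
  have hu := modbd n y hN
  have hv := modbd n ((ν:ℤ)+1) hN
  have hvc := modcases n ((ν:ℤ)+1) hN (by omega) (by omega)
  by_cases h1 : y % n = ((ν:ℤ)+1) % n
  · have hcI : cInv n ν y = y + (-1 - (ν:ℤ)) := by simp only [cInv, if_pos h1]; ring
    rw [hcI]
    have hb := modbd n (y + (-1-(ν:ℤ))) hN
    have hc := modc n y (-1-(ν:ℤ)) hN (by omega) (by omega)
    simp only [cF]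
    split_ifs <;> omega
  · by_cases h2 : 1 ≤ y % n ∧ y % n ≤ ν
    · have hcI : cInv n ν y = y := by simp only [cInv, if_neg h1, if_pos h2]
      rw [hcI]
      simp only [cF]
      split_ifs <;> omega
    · have hcI : cInv n ν y = y + (-1) := by
        simp only [cInv, if_neg h1, if_neg h2]; ring
      rw [hcI]
      have hb := modbd n (y + (-1:ℤ)) hN
      have hc := modc n y (-1) hN (by omega) (by omega)
      simp only [cF]
      split_ifs <;> omega

lemma sFun_cF {ν : ℕ} (hν : ν + 1 < n) (x : ℤ) :
    sFun n (ν+1) (cF n ν x) = cF n (ν+1) x := by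
  have hN : (0:ℤ) < n := by exact_mod_cast (by omega : 0 < n)
  have hνZ : (ν:ℤ) + 1 < n := by exact_mod_cast hν
  have hu := modbd n x hN
  have hv1 := modcases n ((ν:ℤ)+1) hN (by omega) (by omega)
  have hv2 := modcases n ((ν:ℤ)+1+1) hN (by omega) (by omega)
  have hb1 := modbd n ((ν:ℤ)+1) hN
  have hb2 := modbd n ((ν:ℤ)+1+1) hN
  by_cases h1 : x % n = 0
  · have hcF : cF n ν x = x + (1 + (ν:ℤ)) := by simp only [cF, if_pos h1]; ring
    rw [hcF]
    have hb := modbd n (x + (1+(ν:ℤ))) hN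
    have hc := modc n x (1+(ν:ℤ)) hN (by omega) (by omega)
    simp only [sFun, cF]
    push_cast
    split_ifs <;> omega
  · by_cases h2 : x % n ≤ ν
    · have hcF : cF n ν x = x := by simp only [cF, if_neg h1, if_pos h2]
      rw [hcF]
      simp only [sFun, cF]
      push_cast
      split_ifs <;> omega
    · have hcF : cF n ν x = x + 1 := by simp only [cF, if_neg h1, if_neg h2]
      rw [hcF]
      have hb := modbd n (x + 1) hN
      have hc := modc n x 1 hN (by omega) (by omega)
      simp only [sFun, cF]
      push_cast
      split_ifs <;> omega

lemma sprod_piF {ν : ℕ} (hν : ν < n) (x : ℤ) : sprod n ν (piF x) = cF n ν x := by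
  have hN : (0:ℤ) < n := by exact_mod_cast (by omega : 0 < n)
  induction ν with
  | zero =>
      have hu := modbd n x hN
      have hb := modbd n (x + 1) hN
      have hc := modc n x 1 hN (by omega) (by omega)
      simp only [sprod, piF, cF, id]
      push_cast
      split_ifs <;> omega
  | succ k ih =>
      have h : sprod n (k+1) (piF x) = sFun n (k+1) (sprod n k (piF x)) := rfl
      rw [h, ih (by omega), sFun_cF hn hν]

/-! Window evaluation lemmas -/

lemma cF_low {ν : ℕ} (k : ℤ) (h1 : 1 ≤ k) (h2 : k ≤ ν) (hν : ν < n) : cF n ν k = k := by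
  have hN : (0:ℤ) < n := by exact_mod_cast (by omega : 0 < n)
  have hνZ : (ν:ℤ) < n := by exact_mod_cast hν
  have e : k % n = k := Int.emod_eq_of_lt (by omega) (by omega)
  simp only [cF, e]
  split_ifs <;> omega

lemma cF_mid {ν : ℕ} (k : ℤ) (h1 : (ν:ℤ) + 1 ≤ k) (h2 : k ≤ (n:ℤ) - 1) (hν : ν < n) :
    cF n ν k = k + 1 := by
  have hN : (0:ℤ) < n := by exact_mod_cast (by omega : 0 < n)
  have e : k % n = k := Int.emod_eq_of_lt (by omega) (by omega)
  simp only [cF, e]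
  split_ifs <;> omega

omit hn in
lemma cF_top (ν : ℕ) : cF n ν (n:ℤ) = (n:ℤ) + 1 + ν := by
  simp [cF, Int.emod_self]

lemma cInv_low {ν : ℕ} (k : ℤ) (h1 : 1 ≤ k) (h2 : k ≤ ν) (hν : ν < n) : cInv n ν k = k := by
  have hN : (0:ℤ) < n := by exact_mod_cast (by omega : 0 < n)
  have hνZ : (ν:ℤ) < n := by exact_mod_cast hν
  have e : k % n = k := Int.emod_eq_of_lt (by omega) (by omega)
  have hv := modbd n ((ν:ℤ)+1) hN
  have hvc := modcases n ((ν:ℤ)+1) hN (by omega) (by omega)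
  simp only [cInv, e]
  split_ifs <;> omega

omit hn in
lemma cInv_mid {ν : ℕ} (hν : ν < n) : cInv n ν ((ν:ℤ)+1) = 0 := by
  have h : cInv n ν ((ν:ℤ)+1) = (ν:ℤ)+1-1-ν := by simp [cInv]
  rw [h]; ring

lemma cInv_high {ν : ℕ} (k : ℤ) (h1 : (ν:ℤ) + 2 ≤ k) (h2 : k ≤ n) (hν : ν < n) :
    cInv n ν k = k - 1 := by
  have hN : (0:ℤ) < n := by exact_mod_cast (by omega : 0 < n)
  have hνZ : (ν:ℤ) < n := by exact_mod_cast hν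
  have hv := modbd n ((ν:ℤ)+1) hN
  have hvc := modcases n ((ν:ℤ)+1) hN (by omega) (by omega)
  have hk := modbd n k hN
  have hkc := modcases n k hN (by omega) (by omega)
  simp only [cInv]
  split_ifs <;> omega

omit hn in
lemma cF_per {ν : ℕ} (x : ℤ) : cF n ν (x + n) = cF n ν x + n := by
  have e : (x + n) % n = x % n := by
    rw [show x + (n:ℤ) = x + n * 1 by ring]; exact Int.add_mul_emod_self_left ..
  simp only [cF, e]
  split_ifs <;> ring

omit hn in
lemma cInv_per {ν : ℕ} (x : ℤ) : cInv n ν (x + n) = cInv n ν x + n := by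
  have e : (x + n) % n = x % n := by
    rw [show x + (n:ℤ) = x + n * 1 by ring]; exact Int.add_mul_emod_self_left ..
  simp only [cInv, e]
  split_ifs <;> ring

lemma cF_bij {ν : ℕ} (hν : ν < n) : Function.Bijective (cF n ν) :=
  Function.bijective_iff_has_inverse.mpr
    ⟨cInv n ν, fun x => cInv_cF hn hν x, fun x => cF_cInv hn hν x⟩

lemma cInv_bij {ν : ℕ} (hν : ν < n) : Function.Bijective (cInv n ν) :=
  Function.bijective_iff_has_inverse.mpr
    ⟨cF n ν, fun x => cF_cInv hn hν x, fun x => cInv_cF hn hν x⟩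

end C

/-! Validity predicate and basic consequences -/

def Valid (n : ℕ) (w : ℤ → ℤ) (r : ℕ) : Prop :=
  Function.Bijective w ∧ (∀ i : ℤ, w (i + n) = w i + n) ∧ 0 < w 1 ∧
  (∀ i : ℤ, 1 ≤ i → i < n → w i < w (i+1)) ∧
  ∑ i ∈ Finset.Icc (1:ℤ) n, (w i - i) = n * r

/-- `nuF n w` is the largest `k ≤ n-1` with `w k < w n - n` (0 if none). -/
def nuF (n : ℕ) (w : ℤ → ℤ) : ℕ := Nat.findGreatest (fun k => w k < w (n:ℤ) - n) (n-1)

section V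
variable {n : ℕ} {w : ℤ → ℤ} {r : ℕ}

lemma mono_aux (hinc : ∀ i : ℤ, 1 ≤ i → i < n → w i < w (i+1)) :
    ∀ (d : ℕ) (i : ℤ), 1 ≤ i → i + d ≤ n → w i + d ≤ w (i + d) := by
  intro d
  induction d with
  | zero => intro i h1 h2; simp
  | succ d ih =>
    intro i h1 h2
    have hc : ((d+1:ℕ):ℤ) = (d:ℤ)+1 := by push_cast; ring
    rw [hc] at h2 ⊢
    have h3 := ih i h1 (by omega)
    have h4 : w (i+d) < w (i+d+1) := hinc (i+d) (by omega) (by omega)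
    have h5 : i + ((d:ℤ)+1) = (i + d) + 1 := by ring
    rw [h5]
    omega

lemma monoV (hinc : ∀ i : ℤ, 1 ≤ i → i < n → w i < w (i+1)) {i j : ℤ}
    (h1 : 1 ≤ i) (h2 : i ≤ j) (h3 : j ≤ n) : w i + (j - i) ≤ w j := by
  obtain ⟨d, rfl⟩ : ∃ d : ℕ, j = i + d := ⟨(j-i).toNat, by omega⟩
  have := mono_aux hinc d i h1 (by omega)
  omega

lemma wper_nat (hper : ∀ i : ℤ, w (i + n) = w i + n) :
    ∀ (m : ℕ) (x : ℤ), w (x + n*m) = w x + n*m := by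
  intro m
  induction m with
  | zero => simp
  | succ m ih =>
    intro x
    have hc : ((m+1:ℕ):ℤ) = (m:ℤ)+1 := by push_cast; ring
    rw [hc]
    have h1 : x + (n:ℤ)*((m:ℤ)+1) = (x + n*m) + n := by ring
    rw [h1, hper, ih]
    ring

lemma wperZ (hper : ∀ i : ℤ, w (i + n) = w i + n) (x k : ℤ) :
    w (x + n*k) = w x + n*k := by
  rcases Int.eq_nat_or_neg k with ⟨m, rfl | rfl⟩
  · exact wper_nat hper m x
  · have h := wper_nat hper m (x - n*m)
    have h2 : x - (n:ℤ)*m + n*m = x := by ring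
    rw [h2] at h
    have h3 : x + (n:ℤ)*(-(m:ℤ)) = x - n*m := by ring
    rw [h3]
    omega

lemma w_zero (hper : ∀ i : ℤ, w (i + n) = w i + n) : w 0 = w (n:ℤ) - n := by
  have := hper 0
  rw [zero_add] at this
  omega

lemma nuF_lt (hn : 2 ≤ n) : nuF n w < n :=
  lt_of_le_of_lt (Nat.findGreatest_le _) (by omega)

lemma nuF_above (hn : 2 ≤ n) (hw : Valid n w r) :
    ∀ k : ℤ, (nuF n w : ℤ) < k → k ≤ n → w (n:ℤ) - n < w k := by
  obtain ⟨hbij, hper, hpos, hinc, hdeg⟩ := hw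
  intro k hk1 hk2
  have hN : (0:ℤ) < n := by exact_mod_cast (by omega : 0 < n)
  have h0 : w 0 = w (n:ℤ) - n := w_zero hper
  rcases eq_or_lt_of_le hk2 with rfl | hk3
  · omega
  · have hk0 : 0 < k := by
      have : (0:ℤ) ≤ (nuF n w : ℤ) := Int.ofNat_nonneg _
      omega
    have hck : ((k.toNat : ℕ) : ℤ) = k := Int.toNat_of_nonneg (by omega)
    have hng : ¬ (w (k.toNat : ℤ) < w (n:ℤ) - n) := by
      apply Nat.findGreatest_is_greatest (P := fun k : ℕ => w (k:ℤ) < w (n:ℤ) - n)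
        (n := n - 1) (k := k.toNat)
      · show nuF n w < k.toNat
        omega
      · omega
    rw [hck] at hng
    have hne : w k ≠ w 0 := fun h => by
      have := hbij.1 h
      omega
    omega

lemma nuF_below (hn : 2 ≤ n) (hw : Valid n w r) :
    ∀ k : ℤ, 1 ≤ k → k ≤ (nuF n w : ℤ) → w k < w (n:ℤ) - n := by
  obtain ⟨hbij, hper, hpos, hinc, hdeg⟩ := hw
  intro k h1 h2
  have hnu1 : 1 ≤ nuF n w := by omega
  have hnu0 : nuF n w ≠ 0 := by omega
  have hspec : w (nuF n w : ℤ) < w (n:ℤ) - n :=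
    Nat.findGreatest_of_ne_zero (P := fun k : ℕ => w (k:ℤ) < w (n:ℤ) - n)
      (n := n - 1) rfl hnu0
  have hle : (nuF n w : ℤ) ≤ n := by
    have h := nuF_lt (w := w) hn
    omega
  have := monoV hinc h1 h2 hle
  omega

lemma wn_gt (hn : 2 ≤ n) (hw : Valid n w (r+1)) : (n:ℤ) < w (n:ℤ) := by
  obtain ⟨hbij, hper, hpos, hinc, hdeg⟩ := hw
  have hN : (0:ℤ) < n := by exact_mod_cast (by omega : 0 < n)
  by_contra hle
  push_neg at hle
  have hzero : ∀ i ∈ Finset.Icc (1:ℤ) n, w i - i = 0 := by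
    intro i hi
    rw [Finset.mem_Icc] at hi
    have hg := monoV hinc (le_refl 1) hi.1 hi.2
    have hl := monoV hinc hi.1 hi.2 (le_refl (n:ℤ))
    omega
  have hsum : ∑ i ∈ Finset.Icc (1:ℤ) n, (w i - i) = 0 := Finset.sum_eq_zero hzero
  rw [hdeg] at hsum
  have : (0:ℤ) < (n:ℤ) * ((r:ℤ)+1) := by positivity
  push_cast at hsum
  omega

end V

/-! Sum helpers -/

lemma IccIoc (c : ℤ) : Finset.Icc (1:ℤ) c = Finset.Ioc 0 c := by
  ext x; simp only [Finset.mem_Icc, Finset.mem_Ioc]; omega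

lemma sum_Ioc_split (f : ℤ → ℤ) {a b c : ℤ} (h1 : a ≤ b) (h2 : b ≤ c) :
    ∑ i ∈ Finset.Ioc a c, f i = (∑ i ∈ Finset.Ioc a b, f i) + ∑ i ∈ Finset.Ioc b c, f i := by
  rw [← Finset.Ioc_union_Ioc_eq_Ioc h1 h2, Finset.sum_union]
  exact Finset.disjoint_left.mpr (by
    intro x hx hx'
    rw [Finset.mem_Ioc] at hx hx'
    omega)

lemma sum_Ioc_single (f : ℤ → ℤ) (a : ℤ) : ∑ i ∈ Finset.Ioc a (a+1), f i = f (a+1) := by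
  have h : Finset.Ioc a (a+1) = {a+1} := by
    ext x; simp only [Finset.mem_Ioc, Finset.mem_singleton]; omega
  rw [h, Finset.sum_singleton]

lemma sum_Ioc_shift (f : ℤ → ℤ) (a b c : ℤ) :
    ∑ i ∈ Finset.Ioc a b, f (i + c) = ∑ i ∈ Finset.Ioc (a+c) (b+c), f i := by
  rw [← Finset.map_add_right_Ioc, Finset.sum_map]
  rfl

/-! The two step lemmas -/

lemma stepUp {n : ℕ} (hn : 2 ≤ n) {w : ℤ → ℤ} {r ν : ℕ} (hw : Valid n w r)
    (hν : ν < n) (hf : nuF n w ≤ ν) :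
    Valid n (w ∘ cF n ν) (r+1) ∧ nuF n (w ∘ cF n ν) = ν := by
  have hN : (0:ℤ) < n := by exact_mod_cast (by omega : 0 < n)
  have hνZ : (ν:ℤ) < n := by exact_mod_cast hν
  have habove := nuF_above hn hw
  obtain ⟨hbij, hper, hpos, hinc, hdeg⟩ := hw
  set W := w ∘ cF n ν with hWdef
  have gA : ∀ k : ℤ, 1 ≤ k → k ≤ (ν:ℤ) → W k = w k := fun k h1 h2 => by
    simp only [hWdef, Function.comp_apply, cF_low hn k h1 h2 hν]
  have gB : ∀ k : ℤ, (ν:ℤ)+1 ≤ k → k ≤ (n:ℤ)-1 → W k = w (k+1) := fun k h1 h2 => by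
    simp only [hWdef, Function.comp_apply, cF_mid hn k h1 h2 hν]
  have gC : W (n:ℤ) = w ((ν:ℤ)+1) + n := by
    simp only [hWdef, Function.comp_apply, cF_top (n := n) ν]
    rw [show (n:ℤ)+1+ν = ((ν:ℤ)+1) + n*1 by ring, wperZ hper]
    ring
  have hWinc : ∀ i : ℤ, 1 ≤ i → i < n → W i < W (i+1) := by
    intro i h1 h2
    by_cases c1 : i + 1 ≤ (ν:ℤ)
    · rw [gA i h1 (by omega), gA (i+1) (by omega) c1]
      exact hinc i h1 h2
    · by_cases c2 : i ≤ (ν:ℤ)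
      · -- i = ν
        by_cases c3 : i + 1 ≤ (n:ℤ) - 1
        · rw [gA i h1 c2, gB (i+1) (by omega) c3]
          have hm := monoV hinc (i := i+1) (j := i+1+1) (by omega) (by omega) (by omega)
          have hi := hinc i h1 h2
          omega
        · have c4 : i + 1 = (n:ℤ) := by omega
          rw [gA i h1 c2, c4, gC]
          have hi := hinc i h1 h2
          rw [c4] at hi
          have c5 : (ν:ℤ)+1 = (n:ℤ) := by omega
          rw [c5]
          omega
      · -- ν + 1 ≤ i
        by_cases c3 : i + 1 ≤ (n:ℤ) - 1
        · rw [gB i (by omega) (by omega), gB (i+1) (by omega) c3]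
          exact hinc (i+1) (by omega) (by omega)
        · have c4 : i + 1 = (n:ℤ) := by omega
          rw [gB i (by omega) (by omega), c4, gC]
          have h5 := habove ((ν:ℤ)+1) (by omega) (by omega)
          omega
  refine ⟨⟨hbij.comp (cF_bij hn hν), ?_, ?_, hWinc, ?_⟩, ?_⟩
  · intro i
    simp only [hWdef, Function.comp_apply]
    rw [cF_per, hper]
  · by_cases hν0 : 1 ≤ (ν:ℤ)
    · rw [gA 1 le_rfl hν0]; exact hpos
    · rw [gB 1 (by omega) (by omega)]
      have := hinc 1 le_rfl (by omega)
      omega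
  · -- degree
    have key : ∑ i ∈ Finset.Icc (1:ℤ) n, W i = (∑ i ∈ Finset.Icc (1:ℤ) n, w i) + n := by
      rw [IccIoc]
      have e1 := sum_Ioc_split W (a := 0) (b := (ν:ℤ)) (c := (n:ℤ)) (by omega) (by omega)
      have e2 := sum_Ioc_split W (a := (ν:ℤ)) (b := (n:ℤ)-1) (c := (n:ℤ)) (by omega) (by omega)
      have e3 : ∑ i ∈ Finset.Ioc ((n:ℤ)-1) n, W i = W n := by
        have h := sum_Ioc_single W ((n:ℤ)-1)
        rw [show (n:ℤ)-1+1 = n by ring] at h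
        exact h
      have e4 : ∑ i ∈ Finset.Ioc (0:ℤ) ν, W i = ∑ i ∈ Finset.Ioc (0:ℤ) ν, w i :=
        Finset.sum_congr rfl (fun i hi => by
          rw [Finset.mem_Ioc] at hi; exact gA i (by omega) hi.2)
      have e5 : ∑ i ∈ Finset.Ioc (ν:ℤ) ((n:ℤ)-1), W i
          = ∑ i ∈ Finset.Ioc (ν:ℤ) ((n:ℤ)-1), w (i+1) :=
        Finset.sum_congr rfl (fun i hi => by
          rw [Finset.mem_Ioc] at hi; exact gB i (by omega) hi.2)
      have e6 : ∑ i ∈ Finset.Ioc (ν:ℤ) ((n:ℤ)-1), w (i+1)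
          = ∑ i ∈ Finset.Ioc ((ν:ℤ)+1) n, w i := by
        rw [sum_Ioc_shift, show (n:ℤ)-1+1 = n by ring]
      have e7 := sum_Ioc_split w (a := 0) (b := (ν:ℤ)) (c := (n:ℤ)) (by omega) (by omega)
      have e8 := sum_Ioc_split w (a := (ν:ℤ)) (b := (ν:ℤ)+1) (c := (n:ℤ)) (by omega) (by omega)
      have e9 : ∑ i ∈ Finset.Ioc (ν:ℤ) ((ν:ℤ)+1), w i = w ((ν:ℤ)+1) := sum_Ioc_single w (ν:ℤ)
      omega
    have h1 : ∑ i ∈ Finset.Icc (1:ℤ) n, (W i - i)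
        = (∑ i ∈ Finset.Icc (1:ℤ) n, W i) - ∑ i ∈ Finset.Icc (1:ℤ) n, i :=
      Finset.sum_sub_distrib _ _
    have h2 : ∑ i ∈ Finset.Icc (1:ℤ) n, (w i - i)
        = (∑ i ∈ Finset.Icc (1:ℤ) n, w i) - ∑ i ∈ Finset.Icc (1:ℤ) n, i :=
      Finset.sum_sub_distrib _ _
    rw [h1, key]
    rw [h2] at hdeg
    have h3 : (n:ℤ)*((r+1 : ℕ):ℤ) = (n:ℤ)*(r:ℤ) + n := by push_cast; ring
    rw [h3]
    omega
  · -- nuF W = ν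
    have hub : nuF n W ≤ ν := by
      by_contra hcon
      push_neg at hcon
      have hm1 : nuF n W ≤ n - 1 := Nat.findGreatest_le _
      have hP : W ((nuF n W : ℕ) : ℤ) < W (n:ℤ) - n :=
        Nat.findGreatest_of_ne_zero (P := fun k : ℕ => W (k:ℤ) < W (n:ℤ) - n)
          (n := n-1) rfl (by omega)
      rw [gB ((nuF n W : ℕ) : ℤ) (by omega) (by omega), gC] at hP
      have hmono := monoV hinc (i := (ν:ℤ)+1) (j := ((nuF n W : ℕ):ℤ)+1)
        (by omega) (by omega) (by omega)
      omega
    have hlb : ν ≤ nuF n W := by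
      rcases Nat.eq_zero_or_pos ν with h0 | hpos'
      · omega
      · apply Nat.le_findGreatest (show ν ≤ n-1 by omega)
        show W ((ν:ℕ) : ℤ) < W (n:ℤ) - n
        rw [gA (ν:ℤ) (by omega) (by omega), gC]
        have := hinc (ν:ℤ) (by omega) (by omega)
        omega
    omega

lemma stepDown {n : ℕ} (hn : 2 ≤ n) {w : ℤ → ℤ} {r : ℕ} (hw : Valid n w (r+1)) :
    Valid n (w ∘ cInv n (nuF n w)) r ∧ nuF n (w ∘ cInv n (nuF n w)) ≤ nuF n w ∧
    (w ∘ cInv n (nuF n w)) ∘ cF n (nuF n w) = w := by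
  have hν : nuF n w < n := nuF_lt hn
  have hN : (0:ℤ) < n := by exact_mod_cast (by omega : 0 < n)
  have habove := nuF_above hn hw
  have hbelow := nuF_below hn hw
  have hwn := wn_gt hn hw
  obtain ⟨hbij, hper, hpos, hinc, hdeg⟩ := hw
  set ν := nuF n w with hνdef
  have hνZ : (ν:ℤ) < n := by exact_mod_cast hν
  set W := w ∘ cInv n ν with hWdef
  have hA : ∀ k : ℤ, 1 ≤ k → k ≤ (ν:ℤ) → W k = w k := fun k h1 h2 => by
    simp only [hWdef, Function.comp_apply, cInv_low hn k h1 h2 hν]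
  have hB : W ((ν:ℤ)+1) = w (n:ℤ) - n := by
    simp only [hWdef, Function.comp_apply, cInv_mid (n := n) hν]
    exact w_zero hper
  have hC : ∀ k : ℤ, (ν:ℤ)+2 ≤ k → k ≤ (n:ℤ) → W k = w (k-1) := fun k h1 h2 => by
    simp only [hWdef, Function.comp_apply, cInv_high hn k h1 h2 hν]
  have hWinc : ∀ i : ℤ, 1 ≤ i → i < n → W i < W (i+1) := by
    intro i h1 h2
    by_cases c1 : i + 1 ≤ (ν:ℤ)
    · rw [hA i h1 (by omega), hA (i+1) (by omega) c1]
      exact hinc i h1 h2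
    · by_cases c2 : i ≤ (ν:ℤ)
      · rw [hA i h1 c2, show i+1 = (ν:ℤ)+1 by omega, hB]
        exact hbelow i h1 (by omega)
      · by_cases c3 : i ≤ (ν:ℤ)+1
        · rw [show i = (ν:ℤ)+1 by omega, hB,
            hC ((ν:ℤ)+1+1) (by omega) (by omega),
            show (ν:ℤ)+1+1-1 = (ν:ℤ)+1 by ring]
          exact habove ((ν:ℤ)+1) (by omega) (by omega)
        · rw [hC i (by omega) (by omega), hC (i+1) (by omega) (by omega),
            show i+1-1 = (i-1)+1 by ring]
          exact hinc (i-1) (by omega) (by omega)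
  refine ⟨⟨hbij.comp (cInv_bij hn hν), ?_, ?_, hWinc, ?_⟩, ?_, ?_⟩
  · intro i
    simp only [hWdef, Function.comp_apply]
    rw [cInv_per, hper]
  · by_cases hν0 : 1 ≤ (ν:ℤ)
    · rw [hA 1 le_rfl hν0]; exact hpos
    · rw [show (1:ℤ) = (ν:ℤ)+1 by omega, hB]
      omega
  · -- degree
    have key : ∑ i ∈ Finset.Icc (1:ℤ) n, W i = (∑ i ∈ Finset.Icc (1:ℤ) n, w i) - n := by
      rw [IccIoc]
      have e1 := sum_Ioc_split W (a := 0) (b := (ν:ℤ)) (c := (n:ℤ)) (by omega) (by omega)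
      have e2 := sum_Ioc_split W (a := (ν:ℤ)) (b := (ν:ℤ)+1) (c := (n:ℤ)) (by omega) (by omega)
      have e3 : ∑ i ∈ Finset.Ioc (ν:ℤ) ((ν:ℤ)+1), W i = W ((ν:ℤ)+1) := sum_Ioc_single W (ν:ℤ)
      have e4 : ∑ i ∈ Finset.Ioc (0:ℤ) ν, W i = ∑ i ∈ Finset.Ioc (0:ℤ) ν, w i :=
        Finset.sum_congr rfl (fun i hi => by
          rw [Finset.mem_Ioc] at hi; exact hA i (by omega) hi.2)
      have e5 : ∑ i ∈ Finset.Ioc ((ν:ℤ)+1) n, W i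
          = ∑ i ∈ Finset.Ioc ((ν:ℤ)+1) n, w (i + (-1)) :=
        Finset.sum_congr rfl (fun i hi => by
          rw [Finset.mem_Ioc] at hi
          rw [hC i (by omega) hi.2, show i - 1 = i + (-1) by ring])
      have e6 : ∑ i ∈ Finset.Ioc ((ν:ℤ)+1) n, w (i + (-1))
          = ∑ i ∈ Finset.Ioc (ν:ℤ) ((n:ℤ)-1), w i := by
        rw [sum_Ioc_shift, show (ν:ℤ)+1+(-1) = (ν:ℤ) by ring,
          show (n:ℤ)+(-1) = (n:ℤ)-1 by ring]
      have e7 := sum_Ioc_split w (a := 0) (b := (ν:ℤ)) (c := (n:ℤ)) (by omega) (by omega)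
      have e8 := sum_Ioc_split w (a := (ν:ℤ)) (b := (n:ℤ)-1) (c := (n:ℤ)) (by omega) (by omega)
      have e9 : ∑ i ∈ Finset.Ioc ((n:ℤ)-1) n, w i = w (n:ℤ) := by
        have h := sum_Ioc_single w ((n:ℤ)-1)
        rw [show (n:ℤ)-1+1 = n by ring] at h
        exact h
      omega
    have h1 : ∑ i ∈ Finset.Icc (1:ℤ) n, (W i - i)
        = (∑ i ∈ Finset.Icc (1:ℤ) n, W i) - ∑ i ∈ Finset.Icc (1:ℤ) n, i :=
      Finset.sum_sub_distrib _ _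
    have h2 : ∑ i ∈ Finset.Icc (1:ℤ) n, (w i - i)
        = (∑ i ∈ Finset.Icc (1:ℤ) n, w i) - ∑ i ∈ Finset.Icc (1:ℤ) n, i :=
      Finset.sum_sub_distrib _ _
    rw [h1, key]
    rw [h2] at hdeg
    have h3 : (n:ℤ)*((r+1 : ℕ):ℤ) = (n:ℤ)*(r:ℤ) + n := by push_cast; ring
    rw [h3] at hdeg
    omega
  · -- nuF W ≤ ν
    by_cases hcase : n - 1 ≤ ν
    · exact le_trans (Nat.findGreatest_le _) hcase
    · by_contra hcon
      push_neg at hcon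
      have hm1 : nuF n W ≤ n - 1 := Nat.findGreatest_le _
      have hP : W ((nuF n W : ℕ) : ℤ) < W (n:ℤ) - n :=
        Nat.findGreatest_of_ne_zero (P := fun k : ℕ => W (k:ℤ) < W (n:ℤ) - n)
          (n := n-1) rfl (by omega)
      rw [hC (n:ℤ) (by omega) le_rfl] at hP
      have hi := hinc ((n:ℤ)-1) (by omega) (by omega)
      rw [show (n:ℤ)-1+1 = n by ring] at hi
      by_cases hm2 : ((nuF n W : ℕ) : ℤ) = (ν:ℤ)+1
      · rw [hm2, hB] at hP
        omega
      · rw [hC ((nuF n W : ℕ) : ℤ) (by omega) (by omega)] at hP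
        have h5 := habove (((nuF n W : ℕ) : ℤ)-1) (by omega) (by omega)
        omega
  · funext x
    simp only [hWdef, Function.comp_apply]
    rw [cInv_cF hn hν]

/-! Products of basic factors -/

def Wl (n : ℕ) (l : List ℕ) : ℤ → ℤ := (l.map fun ν => cF n ν).foldr (· ∘ ·) id

lemma foldr_comp_shift (L : List (ℤ → ℤ)) (g : ℤ → ℤ) :
    L.foldr (· ∘ ·) g = (L.foldr (· ∘ ·) id) ∘ g := by
  induction L with
  | nil => simp
  | cons f t ih => simp only [List.foldr_cons, ih]; rfl

lemma Wl_concat (n : ℕ) (l : List ℕ) (a : ℕ) :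
    Wl n (l ++ [a]) = Wl n l ∘ cF n a := by
  unfold Wl
  rw [List.map_append, List.foldr_append]
  simp only [List.map_cons, List.map_nil, List.foldr_cons, List.foldr_nil]
  rw [foldr_comp_shift, Function.comp_id]

lemma valid_id {n : ℕ} (hn : 2 ≤ n) : Valid n id 0 := by
  refine ⟨Function.bijective_id, by simp, by simp, ?_, by simp⟩
  intro i _ _
  simp only [id_eq]
  omega

lemma valid_zero_eq_id {n : ℕ} {w : ℤ → ℤ} (hn : 2 ≤ n) (hw : Valid n w 0) : w = id := by
  obtain ⟨hbij, hper, hpos, hinc, hdeg⟩ := hw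
  have hN : (0:ℤ) < n := by exact_mod_cast (by omega : 0 < n)
  have hnn : ∀ i ∈ Finset.Icc (1:ℤ) n, 0 ≤ w i - i := by
    intro i hi
    rw [Finset.mem_Icc] at hi
    have := monoV hinc (i := 1) (j := i) le_rfl hi.1 hi.2
    omega
  have hdeg0 : ∑ i ∈ Finset.Icc (1:ℤ) n, (w i - i) = 0 := by rw [hdeg]; simp
  have hzero := (Finset.sum_eq_zero_iff_of_nonneg hnn).1 hdeg0
  have hid : ∀ i : ℤ, 1 ≤ i → i ≤ n → w i = i := by
    intro i h1 h2
    have := hzero i (Finset.mem_Icc.mpr ⟨h1, h2⟩)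
    omega
  funext x
  have hb := modbd n (x-1) hN
  have hdiv := Int.emod_add_mul_ediv (x-1) n
  have hx : x = (1 + (x-1) % n) + n * ((x-1)/n) := by omega
  have h1 := wperZ hper (1 + (x-1) % n) ((x-1)/n)
  have h2 : w (1 + (x-1) % n) = 1 + (x-1) % n := hid _ (by omega) (by omega)
  rw [hx, h1, h2]
  simp only [id_eq]

lemma sorted_le_getLast : ∀ (l : List ℕ) (h : l ≠ []), l.Pairwise (· ≤ ·) →
    ∀ x ∈ l, x ≤ l.getLast h := by
  intro l
  induction l with
  | nil => intro h; exact absurd rfl h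
  | cons a t ih =>
    intro h hs x hx
    rcases eq_or_ne t [] with rfl | ht
    · rw [List.mem_singleton] at hx
      subst hx
      exact le_rfl
    · rw [List.getLast_cons ht]
      rcases List.mem_cons.mp hx with rfl | hx'
      · exact (List.pairwise_cons.mp hs).1 _ (List.getLast_mem ht)
      · exact ih ht hs.of_cons x hx'

lemma validWl {n : ℕ} (hn : 2 ≤ n) : ∀ l : List ℕ, l.Pairwise (· ≤ ·) → (∀ x ∈ l, x < n) →
    Valid n (Wl n l) l.length ∧ ∀ h : l ≠ [], nuF n (Wl n l) = l.getLast h := by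
  intro l
  induction l using List.reverseRecOn with
  | nil =>
    intro _ _
    exact ⟨valid_id hn, fun h => absurd rfl h⟩
  | append_singleton l a ih =>
    intro hs hb
    have hsl : l.Pairwise (· ≤ ·) := (List.pairwise_append.mp hs).1
    have hla : ∀ x ∈ l, x ≤ a := fun x hx =>
      (List.pairwise_append.mp hs).2.2 x hx a (by simp)
    have hbl : ∀ x ∈ l, x < n := fun x hx => hb x (by simp [hx])
    have ha : a < n := hb a (by simp)
    obtain ⟨hv, hlast⟩ := ih hsl hbl
    have hfle : nuF n (Wl n l) ≤ a := by
      rcases eq_or_ne l [] with rfl | hne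
      · by_contra hcon
        push_neg at hcon
        have h0 : nuF n (Wl n []) ≠ 0 := by omega
        have hP : Wl n [] ((nuF n (Wl n []) : ℕ) : ℤ) < Wl n [] (n:ℤ) - n :=
          Nat.findGreatest_of_ne_zero
            (P := fun k : ℕ => Wl n [] (k:ℤ) < Wl n [] (n:ℤ) - n) (n := n-1) rfl h0
        have hid : ∀ y : ℤ, Wl n [] y = y := fun y => rfl
        rw [hid, hid] at hP
        have hnn : (0:ℤ) ≤ ((nuF n (Wl n [])) : ℤ) := Int.ofNat_nonneg _
        omega
      · rw [hlast hne]
        exact hla _ (List.getLast_mem hne)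
    obtain ⟨hv2, hnu2⟩ := stepUp hn hv ha hfle
    constructor
    · rw [Wl_concat, List.length_append, List.length_singleton]
      exact hv2
    · intro h
      rw [Wl_concat, List.getLast_append]
      exact hnu2

lemma existsWl {n : ℕ} (hn : 2 ≤ n) : ∀ (r : ℕ) (w : ℤ → ℤ), Valid n w r →
    ∃ l : List ℕ, l.Pairwise (· ≤ ·) ∧ (∀ x ∈ l, x < n) ∧ l.length = r ∧ Wl n l = w := by
  intro r
  induction r with
  | zero =>
    intro w hw
    exact ⟨[], List.Pairwise.nil, by simp, rfl, ((valid_zero_eq_id hn hw).symm : id = w)⟩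
  | succ r ih =>
    intro w hw
    obtain ⟨hv', hle, hcomp⟩ := stepDown hn hw
    obtain ⟨l', hs', hb', hlen', hWl'⟩ := ih _ hv'
    have hνn : nuF n w < n := nuF_lt hn
    refine ⟨l' ++ [nuF n w], ?_, ?_, ?_, ?_⟩
    · apply List.pairwise_append.mpr
      refine ⟨hs', List.pairwise_singleton _ _, ?_⟩
      intro x hx b hb2
      rw [List.mem_singleton] at hb2
      subst hb2
      rcases eq_or_ne l' [] with rfl | hne
      · simp at hx
      · have h1 := sorted_le_getLast l' hne hs' x hx
        have h2 := (validWl hn l' hs' hb').2 hne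
        rw [hWl'] at h2
        omega
    · intro x hx
      rcases List.mem_append.mp hx with h | h
      · exact hb' x h
      · rw [List.mem_singleton] at h
        subst h
        exact hνn
    · rw [List.length_append, hlen']
      simp
    · rw [Wl_concat, hWl', hcomp]

lemma lengthWl_eq {n : ℕ} (hn : 2 ≤ n) {l m : List ℕ} (hsl : l.Pairwise (· ≤ ·))
    (hbl : ∀ x ∈ l, x < n) (hsm : m.Pairwise (· ≤ ·)) (hbm : ∀ x ∈ m, x < n)
    (heq : Wl n l = Wl n m) : l.length = m.length := by
  have h1 := (validWl hn l hsl hbl).1.2.2.2.2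
  have h2 := (validWl hn m hsm hbm).1.2.2.2.2
  rw [heq] at h1
  rw [h1] at h2
  have hN : (n:ℤ) ≠ 0 := by exact_mod_cast (by omega : n ≠ 0)
  have h3 := mul_left_cancel₀ hN h2
  exact_mod_cast h3

lemma uniqueWl {n : ℕ} (hn : 2 ≤ n) : ∀ (N : ℕ) (l m : List ℕ), l.length ≤ N →
    l.Pairwise (· ≤ ·) → (∀ x ∈ l, x < n) → m.Pairwise (· ≤ ·) → (∀ x ∈ m, x < n) →
    Wl n l = Wl n m → l = m := by
  intro N
  induction N with
  | zero =>
    intro l m hlen hsl hbl hsm hbm heq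
    have hlm := lengthWl_eq hn hsl hbl hsm hbm heq
    obtain rfl : l = [] := List.length_eq_zero_iff.mp (by omega)
    obtain rfl : m = [] := List.length_eq_zero_iff.mp (by omega)
    rfl
  | succ N ih =>
    intro l m hlen hsl hbl hsm hbm heq
    have hlm := lengthWl_eq hn hsl hbl hsm hbm heq
    rcases l.eq_nil_or_concat' with rfl | ⟨l', a, rfl⟩
    · obtain rfl : m = [] := List.length_eq_zero_iff.mp (by simpa using hlm.symm)
      rfl
    · rcases m.eq_nil_or_concat' with rfl | ⟨m', b, rfl⟩
      · exfalso
        rw [List.length_append] at hlm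
        simp at hlm
      · have ha : a < n := hbl a (by simp)
        have hga : nuF n (Wl n (l' ++ [a])) = a := by
          simpa using (validWl hn _ hsl hbl).2 (by simp : l' ++ [a] ≠ [])
        have hgb : nuF n (Wl n (m' ++ [b])) = b := by
          simpa using (validWl hn _ hsm hbm).2 (by simp : m' ++ [b] ≠ [])
        rw [heq] at hga
        obtain rfl : a = b := by omega
        have heq2 : Wl n l' ∘ cF n a = Wl n m' ∘ cF n a := by
          rw [← Wl_concat, ← Wl_concat]
          exact heq
        have hpref : Wl n l' = Wl n m' := funext fun x => by
          have h2 := congrFun heq2 (cInv n a x)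
          simp only [Function.comp_apply] at h2
          rwa [cF_cInv hn ha] at h2
        have hcut : l' = m' := by
          apply ih l' m' ?_ (List.pairwise_append.mp hsl).1
            (fun x hx => hbl x (by simp [hx])) (List.pairwise_append.mp hsm).1
            (fun x hx => hbm x (by simp [hx])) hpref
          rw [List.length_append] at hlen
          simp at hlen
          omega
        rw [hcut]

/-- Every affine permutation `w` with `0 < w 1 < ⋯ < w n` of degree
`r > 0` can be uniquely written as
`w = (s_{ν_r}⋯s_1)π ⋯ (s_{ν_2}⋯s_1)π (s_{ν_1}⋯s_1)π` with
`n > ν_1 ≥ ν_2 ≥ ⋯ ≥ ν_r ≥ 0`; here the list `l = [ν_r, …, ν_1]` is sorted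
non-decreasingly with all entries `< n` and length `r`. -/
theorem stmt_2 (n : ℕ) (hn : 2 ≤ n) (w : ℤ → ℤ)
    (hbij : Function.Bijective w) (hper : ∀ i : ℤ, w (i + n) = w i + n)
    (hpos : 0 < w 1) (hinc : ∀ i : ℤ, 1 ≤ i → i < n → w i < w (i + 1))
    (r : ℕ) (hr : 0 < r)
    (hdeg : ∑ i ∈ Finset.Icc (1 : ℤ) n, (w i - i) = n * r) :
    ∃! l : List ℕ, l.length = r ∧ l.Pairwise (· ≤ ·) ∧ (∀ x ∈ l, x < n) ∧
      w = (l.map fun ν => sprod n ν ∘ piF).foldr (· ∘ ·) id := by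
  have hw : Valid n w r := ⟨hbij, hper, hpos, hinc, hdeg⟩
  obtain ⟨l, hs, hb, hlen, hWl⟩ := existsWl hn r w hw
  have hmap : ∀ (m : List ℕ), (∀ x ∈ m, x < n) →
      (m.map fun ν => sprod n ν ∘ piF).foldr (· ∘ ·) id = Wl n m := by
    intro m hbm
    unfold Wl
    congr 1
    apply List.map_congr_left
    intro x hx
    funext y
    exact sprod_piF hn (hbm x hx) y
  refine ⟨l, ⟨hlen, hs, hb, ?_⟩, ?_⟩
  · rw [hmap l hb, hWl]
  · rintro m ⟨hlen', hs', hb', heq⟩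
    exact uniqueWl hn m.length m l le_rfl hs' hb' hs hb
      ((hmap m hb').symm.trans (heq.symm.trans hWl.symm))
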